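/- With c = c(x) satisfying (e^c − 1 − 3c)/(2c²) = x and ξ(z) = K(z) − log z where K(z) = ∫_0^z (e^y−1−y)/(2y²) dy, one has e^{−xc + ξ(c)} = x^{−x} (log x)^{−2x} (e/2)^{x + o(x)} as x → ∞. -/

import Mathlib

open Filter Real Asymptotics MeasureTheory intervalIntegral Set

lemma aux_quad : ∀ y : ℝ, 0 ≤ y → 1 - (1+y) * Real.exp (-y) ≤ y^2/2 := by
  have hmono : MonotoneOn (fun y : ℝ => y^2/2 - 1 + (1+y) * Real.exp (-y)) (Set.Ici 0) := by
    apply monotoneOn_of_deriv_nonneg (convex_Ici 0)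
    · fun_prop
    · apply Differentiable.differentiableOn; fun_prop
    · intro y hy
      rw [interior_Ici] at hy
      have : HasDerivAt (fun y : ℝ => y^2/2 - 1 + (1+y) * Real.exp (-y))
          (y - y * Real.exp (-y)) y := by
        have h1 : HasDerivAt (fun y : ℝ => Real.exp (-y)) (-Real.exp (-y)) y := by
          simpa using (hasDerivAt_id y).neg.exp
        have h2 : HasDerivAt (fun y : ℝ => (1+y) * Real.exp (-y))
            (1 * Real.exp (-y) + (1+y) * (-Real.exp (-y))) y :=
          (((hasDerivAt_id y).const_add 1)).mul h1
        have h3 : HasDerivAt (fun y : ℝ => y^2/2 - 1) y y := by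
          have := ((hasDerivAt_pow 2 y).div_const 2).sub_const 1
          simpa using this
        refine (h3.add h2).congr_deriv ?_
        ring
      rw [this.deriv]
      have : Real.exp (-y) ≤ 1 := Real.exp_le_one_iff.2 (by linarith [(Set.mem_Ioi.mp hy).le])
      nlinarith [Real.exp_pos (-y), (Set.mem_Ioi.mp hy).le]
  intro y hy
  have := hmono (Set.self_mem_Ici) hy hy
  simp only [Real.exp_zero, neg_zero] at this
  nlinarith [this]

lemma exp_sub_le (y : ℝ) (hy : 0 ≤ y) : Real.exp y - 1 - y ≤ y^2/2 * Real.exp y := by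
  have h := aux_quad y hy
  have he : Real.exp (-y) = (Real.exp y)⁻¹ := Real.exp_neg y
  have hp : 0 < Real.exp y := Real.exp_pos y
  rw [he] at h
  have := mul_le_mul_of_nonneg_right h hp.le
  field_simp at this ⊢
  nlinarith [this]

lemma g_le (y : ℝ) (hy : 0 ≤ y) :
    (Real.exp y - 1 - y) / (2 * y^2) ≤ Real.exp y / 4 := by
  rcases eq_or_lt_of_le hy with h | h
  · rw [← h]; norm_num
  · rw [div_le_div_iff₀ (by positivity) (by norm_num)]
    nlinarith [exp_sub_le y hy]

lemma g_nonneg (y : ℝ) : 0 ≤ (Real.exp y - 1 - y) / (2 * y^2) := by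
  apply div_nonneg _ (by positivity)
  nlinarith [Real.add_one_le_exp y]

lemma exp_ge_quad (y : ℝ) (hy : 0 ≤ y) : y * (1+y) / 2 ≤ Real.exp y := by
  have := Real.sum_le_exp_of_nonneg hy 4
  simp [Finset.sum_range_succ, Nat.factorial] at this
  nlinarith [pow_nonneg hy 3, this]

/-- `K(z) = ∫_0^z (e^y - 1 - y)/(2y²) dy`. -/
noncomputable def K (z : ℝ) : ℝ :=
  ∫ y in (0:ℝ)..z, (Real.exp y - 1 - y) / (2 * y ^ 2)

/-- `ξ(z) = K(z) - log z`. -/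
noncomputable def ξ (z : ℝ) : ℝ := K z - Real.log z

lemma g_meas : Measurable (fun y => (Real.exp y - 1 - y) / (2 * y ^ 2)) := by
  fun_prop

lemma g_intble0 : IntervalIntegrable (fun y => (Real.exp y - 1 - y) / (2 * y ^ 2))
    volume (0:ℝ) 3 := by
  rw [intervalIntegrable_iff, Set.uIoc_of_le (by norm_num : (0:ℝ) ≤ 3)]
  apply Measure.integrableOn_of_bounded (M := Real.exp 3 / 4)
  · simp [Real.volume_Ioc]
  · exact g_meas.aestronglyMeasurable
  · filter_upwards [MeasureTheory.ae_restrict_mem measurableSet_Ioc] with y hy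
    rw [Real.norm_of_nonneg (g_nonneg y)]
    calc (Real.exp y - 1 - y) / (2 * y ^ 2) ≤ Real.exp y / 4 := g_le y hy.1.le
    _ ≤ Real.exp 3 / 4 := by gcongr; exact hy.2

lemma cont_on_pos {a b : ℝ} (ha : 0 < a) (f : ℝ → ℝ) (hf : Continuous f) (n : ℕ) :
    ContinuousOn (fun y => f y / y ^ n) (Set.Icc a b) := by
  apply hf.continuousOn.div (by fun_prop)
  intro y hy
  have : 0 < y := lt_of_lt_of_le ha hy.1
  positivity

lemma g_intble (z : ℝ) (hz : 3 ≤ z) :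
    IntervalIntegrable (fun y => (Real.exp y - 1 - y) / (2 * y ^ 2)) volume 3 z := by
  apply ContinuousOn.intervalIntegrable
  rw [Set.uIcc_of_le hz]
  apply ContinuousOn.congr (cont_on_pos (by norm_num) (fun y => (Real.exp y - 1 - y)/2)
    (by fun_prop) 2)
  intro y _
  show (Real.exp y - 1 - y) / (2 * y ^ 2) = (Real.exp y - 1 - y) / 2 / y ^ 2
  rw [div_div]

lemma K_eq (z : ℝ) (hz : 3 ≤ z) :
    K z = K 3 + ∫ y in (3:ℝ)..z, (Real.exp y - 1 - y) / (2 * y ^ 2) := by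
  rw [K, K, integral_add_adjacent_intervals g_intble0 (g_intble z hz)]

lemma F_hasDeriv (t : ℝ) (ht : t ≠ 0) :
    HasDerivAt (fun y => Real.exp y / (2 * y ^ 2))
      (Real.exp t / (2 * t ^ 2) - Real.exp t / t ^ 3) t := by
  have h := (Real.hasDerivAt_exp t).div (((hasDerivAt_pow 2 t).const_mul 2)) (by positivity)
  refine h.congr_deriv ?_
  field_simp
  ring

lemma FTC_F (z : ℝ) (hz : 3 ≤ z) :
    ∫ y in (3:ℝ)..z, (Real.exp y / (2 * y ^ 2) - Real.exp y / y ^ 3)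
      = Real.exp z / (2 * z ^ 2) - Real.exp 3 / (2 * 3 ^ 2) := by
  have : ∀ t ∈ Set.uIcc (3:ℝ) z, HasDerivAt (fun y => Real.exp y / (2 * y ^ 2))
      (Real.exp t / (2 * t ^ 2) - Real.exp t / t ^ 3) t := by
    intro t ht
    rw [Set.uIcc_of_le hz] at ht
    exact F_hasDeriv t (by intro h; rw [h] at ht; linarith [ht.1])
  have hint : IntervalIntegrable
      (fun t => Real.exp t / (2 * t ^ 2) - Real.exp t / t ^ 3) volume 3 z := by
    apply ContinuousOn.intervalIntegrable
    rw [Set.uIcc_of_le hz]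
    apply ContinuousOn.sub
    · apply ContinuousOn.congr (cont_on_pos (by norm_num) (fun y => Real.exp y / 2)
        (by fun_prop) 2)
      intro y _
      show Real.exp y / (2 * y ^ 2) = Real.exp y / 2 / y ^ 2
      rw [div_div]
    · exact cont_on_pos (by norm_num) _ (by fun_prop) 3
  rw [integral_eq_sub_of_hasDerivAt this hint]

lemma Fp_intble (z : ℝ) (hz : 3 ≤ z) : IntervalIntegrable
    (fun t => Real.exp t / (2 * t ^ 2) - Real.exp t / t ^ 3) volume 3 z := by
  apply ContinuousOn.intervalIntegrable
  rw [Set.uIcc_of_le hz]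
  apply ContinuousOn.sub
  · apply ContinuousOn.congr (cont_on_pos (by norm_num) (fun y => Real.exp y / 2)
      (by fun_prop) 2)
    intro y _
    show Real.exp y / (2 * y ^ 2) = Real.exp y / 2 / y ^ 2
    rw [div_div]
  · exact cont_on_pos (by norm_num) _ (by fun_prop) 3

lemma ey3_intble (a b : ℝ) (ha : 0 < a) (hab : a ≤ b) :
    IntervalIntegrable (fun y => Real.exp y / y ^ 3) volume a b := by
  apply ContinuousOn.intervalIntegrable
  rw [Set.uIcc_of_le hab]
  exact cont_on_pos ha _ (by fun_prop) 3

lemma diff_nonneg (y : ℝ) (hy : 3 ≤ y) :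
    0 ≤ (Real.exp y - 1 - y) / (2 * y ^ 2)
        - (Real.exp y / (2 * y ^ 2) - Real.exp y / y ^ 3) := by
  have hy0 : (0:ℝ) < y := by linarith
  have heq : (Real.exp y - 1 - y) / (2 * y ^ 2)
      - (Real.exp y / (2 * y ^ 2) - Real.exp y / y ^ 3)
      = (2 * Real.exp y - y * (1 + y)) / (2 * y ^ 3) := by
    field_simp
    ring
  rw [heq]
  apply div_nonneg _ (by positivity)
  nlinarith [exp_ge_quad y (by linarith)]

lemma diff_le (y : ℝ) (hy : 3 ≤ y) :
    (Real.exp y - 1 - y) / (2 * y ^ 2)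
      - (Real.exp y / (2 * y ^ 2) - Real.exp y / y ^ 3) ≤ Real.exp y / y ^ 3 := by
  have hy0 : (0:ℝ) < y := by linarith
  have heq : (Real.exp y - 1 - y) / (2 * y ^ 2)
      - (Real.exp y / (2 * y ^ 2) - Real.exp y / y ^ 3)
      = Real.exp y / y ^ 3 - (1 + y) / (2 * y ^ 2) := by
    field_simp
    ring
  rw [heq]
  have : 0 ≤ (1 + y) / (2 * y ^ 2) := by positivity
  linarith

lemma int1 (z : ℝ) (hz : 6 ≤ z) :
    ∫ y in (3:ℝ)..(z/2), Real.exp y / y ^ 3 ≤ Real.exp (z/2) * z := by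
  have h32 : (3:ℝ) ≤ z/2 := by linarith
  calc ∫ y in (3:ℝ)..(z/2), Real.exp y / y ^ 3
      ≤ ∫ _ in (3:ℝ)..(z/2), Real.exp (z/2) := by
        apply integral_mono_on h32 (ey3_intble 3 (z/2) (by norm_num) h32)
          intervalIntegrable_const
        intro y hy
        calc Real.exp y / y ^ 3 ≤ Real.exp y :=
              div_le_self (Real.exp_pos y).le (by nlinarith [hy.1, hy.2, sq_nonneg y])
        _ ≤ Real.exp (z/2) := Real.exp_le_exp.2 hy.2
    _ = (z/2 - 3) * Real.exp (z/2) := by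
        rw [intervalIntegral.integral_const]; simp [smul_eq_mul]
    _ ≤ Real.exp (z/2) * z := by nlinarith [Real.exp_pos (z/2)]

lemma int2 (z : ℝ) (hz : 6 ≤ z) :
    ∫ y in (z/2)..z, Real.exp y / y ^ 3 ≤ 8 * Real.exp z / z ^ 3 := by
  have hzz : z/2 ≤ z := by linarith
  have hz0 : (0:ℝ) < z := by linarith
  calc ∫ y in (z/2)..z, Real.exp y / y ^ 3
      ≤ ∫ y in (z/2)..z, Real.exp y * (8 / z ^ 3) := by
        apply integral_mono_on hzz (ey3_intble (z/2) z (by linarith) hzz)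
        · exact (continuous_exp.mul continuous_const).intervalIntegrable _ _
        intro y hy
        rw [div_eq_mul_inv, mul_comm (Real.exp y)]
        rw [mul_comm (Real.exp y) (8 / z^3)]
        apply mul_le_mul_of_nonneg_right _ (Real.exp_pos y).le
        have hy0 : (0:ℝ) < y := by linarith [hy.1]
        rw [inv_eq_one_div, div_le_div_iff₀ (by positivity) (by positivity)]
        nlinarith [pow_le_pow_left₀ (by linarith : (0:ℝ) ≤ z/2) hy.1 3]
    _ = (Real.exp z - Real.exp (z/2)) * (8 / z ^ 3) := by
        rw [intervalIntegral.integral_mul_const, integral_exp]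
    _ ≤ Real.exp z * (8 / z ^ 3) := by
        apply mul_le_mul_of_nonneg_right (by linarith [Real.exp_pos (z/2)]) (by positivity)
    _ = 8 * Real.exp z / z ^ 3 := by ring

lemma KF_sandwich (z : ℝ) (hz : 6 ≤ z) :
    K 3 - Real.exp 3 / (2 * 3 ^ 2) ≤ K z - Real.exp z / (2 * z ^ 2) ∧
    K z - Real.exp z / (2 * z ^ 2) ≤ (K 3 - Real.exp 3 / (2 * 3 ^ 2))
      + (Real.exp (z/2) * z + 8 * Real.exp z / z ^ 3) := by
  have hz3 : (3:ℝ) ≤ z := by linarith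
  have hKz := K_eq z hz3
  have hF := FTC_F z hz3
  have hsub : (∫ y in (3:ℝ)..z, ((Real.exp y - 1 - y) / (2 * y ^ 2)
        - (Real.exp y / (2 * y ^ 2) - Real.exp y / y ^ 3)))
      = (∫ y in (3:ℝ)..z, (Real.exp y - 1 - y) / (2 * y ^ 2))
        - ∫ y in (3:ℝ)..z, (Real.exp y / (2 * y ^ 2) - Real.exp y / y ^ 3) :=
    intervalIntegral.integral_sub (g_intble z hz3) (Fp_intble z hz3)
  set I := ∫ y in (3:ℝ)..z, ((Real.exp y - 1 - y) / (2 * y ^ 2)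
      - (Real.exp y / (2 * y ^ 2) - Real.exp y / y ^ 3)) with hI
  have hI0 : 0 ≤ I :=
    intervalIntegral.integral_nonneg hz3 (fun y hy => diff_nonneg y hy.1)
  have hIu : I ≤ Real.exp (z/2) * z + 8 * Real.exp z / z ^ 3 := by
    calc I ≤ ∫ y in (3:ℝ)..z, Real.exp y / y ^ 3 := by
          apply integral_mono_on hz3 ((g_intble z hz3).sub (Fp_intble z hz3))
            (ey3_intble 3 z (by norm_num) hz3)
          intro y hy; exact diff_le y hy.1
      _ = (∫ y in (3:ℝ)..(z/2), Real.exp y / y ^ 3)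
            + ∫ y in (z/2)..z, Real.exp y / y ^ 3 :=
          (integral_add_adjacent_intervals
            (ey3_intble 3 (z/2) (by norm_num) (by linarith))
            (ey3_intble (z/2) z (by linarith) (by linarith))).symm
      _ ≤ _ := add_le_add (int1 z hz) (int2 z hz)
  constructor <;> linarith [hKz, hF, hsub]

lemma F_atTop : Tendsto (fun z : ℝ => Real.exp z / (2 * z ^ 2)) atTop atTop := by
  have h := (tendsto_exp_div_pow_atTop 2).atTop_div_const (by norm_num : (0:ℝ) < 2)
  apply h.congr
  intro z
  ring

lemma K_asymp : Tendsto (fun z => (K z - Real.exp z / (2 * z ^ 2))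
    / (Real.exp z / (2 * z ^ 2))) atTop (nhds 0) := by
  set D := K 3 - Real.exp 3 / (2 * 3 ^ 2) with hD
  have hlow : Tendsto (fun z : ℝ => D / (Real.exp z / (2 * z ^ 2))) atTop (nhds 0) :=
    tendsto_const_nhds.div_atTop F_atTop
  have hup : Tendsto (fun z : ℝ => (D + (Real.exp (z/2) * z + 8 * Real.exp z / z ^ 3))
      / (Real.exp z / (2 * z ^ 2))) atTop (nhds 0) := by
    have h1 : Tendsto (fun z : ℝ => Real.exp (z/2) * z / (Real.exp z / (2 * z ^ 2)))
        atTop (nhds 0) := by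
      have hc : Tendsto (fun z : ℝ => z/2) atTop atTop :=
        tendsto_id.atTop_div_const (by norm_num)
      have := ((tendsto_pow_mul_exp_neg_atTop_nhds_zero 3).comp hc).const_mul (16:ℝ)
      rw [mul_zero] at this
      apply this.congr'
      filter_upwards [eventually_gt_atTop (0:ℝ)] with z hz
      have hez : Real.exp z = Real.exp (z/2) * Real.exp (z/2) := by
        rw [← Real.exp_add]; ring_nf
      simp only [Function.comp_apply]
      rw [Real.exp_neg]
      field_simp [hez]
      rw [hez]; ring_nf
    have h2 : Tendsto (fun z : ℝ => 8 * Real.exp z / z ^ 3 / (Real.exp z / (2 * z ^ 2)))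
        atTop (nhds 0) := by
      have : Tendsto (fun z : ℝ => 16 / z) atTop (nhds 0) :=
        tendsto_const_nhds.div_atTop tendsto_id
      apply this.congr'
      filter_upwards [eventually_gt_atTop (0:ℝ)] with z hz
      field_simp
      ring
    have := (hlow.add h1).add h2
    rw [add_zero, add_zero] at this
    apply this.congr'
    filter_upwards [eventually_gt_atTop (0:ℝ)] with z hz
    rw [← add_div, ← add_div]
    ring_nf
  apply tendsto_of_tendsto_of_tendsto_of_le_of_le' hlow hup
  · filter_upwards [eventually_ge_atTop (6:ℝ)] with z hz
    have hFpos : 0 < Real.exp z / (2 * z ^ 2) := by positivity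
    exact div_le_div_of_nonneg_right ((KF_sandwich z hz).1) hFpos.le
  · filter_upwards [eventually_ge_atTop (6:ℝ)] with z hz
    have hFpos : 0 < Real.exp z / (2 * z ^ 2) := by positivity
    exact div_le_div_of_nonneg_right ((KF_sandwich z hz).2) hFpos.le

/-- With `c(x)` the saddle point, `e^{-xc + ξ(c)} = x^{-x} (log x)^{-2x} (e/2)^{x+o(x)}`,
i.e. `log (e^{-xc+ξ(c)}) = -x log x - 2x log log x + x(1 - log 2) + o(x)`. -/
theorem stmt16 (c : ℝ → ℝ)
    (hc : ∀ᶠ x in atTop, 0 < c x ∧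
      (Real.exp (c x) - 1 - 3 * c x) / (2 * (c x) ^ 2) = x) :
    (fun x => (-(x * c x) + ξ (c x))
        - (-(x * Real.log x) - 2 * x * Real.log (Real.log x)
            + x * (1 - Real.log 2)))
      =o[atTop] fun x => x := by
  have hpos : ∀ᶠ x in atTop, 0 < c x := hc.mono fun x h => h.1
  have hlogid : Tendsto (fun t : ℝ => Real.log t / t) atTop (nhds 0) :=
    Real.isLittleO_log_id_atTop.tendsto_div_nhds_zero
  -- c → ∞
  have hca : Tendsto c atTop atTop := by
    rw [tendsto_atTop]
    intro M
    filter_upwards [hc, eventually_gt_atTop (Real.exp M / 4)] with x hx hxM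
    by_contra hcon
    push_neg at hcon
    obtain ⟨hc0, hce⟩ := hx
    have h1 : (Real.exp (c x) - 1 - 3 * c x) / (2 * (c x) ^ 2)
        ≤ (Real.exp (c x) - 1 - c x) / (2 * (c x) ^ 2) :=
      div_le_div_of_nonneg_right (by linarith) (by positivity)
    have h2 := g_le (c x) hc0.le
    have hlt : x < x := by
      calc x = (Real.exp (c x) - 1 - 3 * c x) / (2 * (c x) ^ 2) := hce.symm
        _ ≤ (Real.exp (c x) - 1 - c x) / (2 * (c x) ^ 2) := h1
        _ ≤ Real.exp (c x) / 4 := h2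
        _ ≤ Real.exp M / 4 := by
              have := Real.exp_le_exp.2 hcon.le
              linarith
        _ < x := hxM
    exact lt_irrefl x hlt
  -- the exponential equation
  have heq : ∀ᶠ x in atTop, Real.exp (c x) = 2 * (c x) ^ 2 * x + 1 + 3 * c x := by
    filter_upwards [hc] with x hx
    obtain ⟨h0, he⟩ := hx
    rw [div_eq_iff (by positivity : (2:ℝ) * (c x) ^ 2 ≠ 0)] at he
    linarith
  set ε : ℝ → ℝ := fun x => (1 + 3 * c x) / (2 * (c x) ^ 2 * x) with hεdef
  have heps : Tendsto ε atTop (nhds 0) := by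
    have h1 : Tendsto (fun t : ℝ => (1 + 3 * t) / (2 * t ^ 2)) atTop (nhds 0) := by
      have hup : Tendsto (fun t : ℝ => 2 / t) atTop (nhds 0) :=
        tendsto_const_nhds.div_atTop tendsto_id
      apply tendsto_of_tendsto_of_tendsto_of_le_of_le' tendsto_const_nhds hup
      · filter_upwards [eventually_ge_atTop (1:ℝ)] with t ht
        positivity
      · filter_upwards [eventually_ge_atTop (1:ℝ)] with t ht
        rw [div_le_div_iff₀ (by positivity) (by positivity)]
        nlinarith
    have h2 : Tendsto (fun x : ℝ => 1 / x) atTop (nhds 0) :=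
      tendsto_const_nhds.div_atTop tendsto_id
    have h3 := (h1.comp hca).mul h2
    rw [mul_zero] at h3
    apply h3.congr'
    filter_upwards [hpos, eventually_gt_atTop (0:ℝ)] with x h0 hx
    simp only [Function.comp_apply, hεdef]
    field_simp
  have hεnn : ∀ᶠ x in atTop, 0 ≤ ε x := by
    filter_upwards [hpos, eventually_gt_atTop (0:ℝ)] with x h0 hx
    simp only [hεdef]
    positivity
  -- the log relation
  have hC : ∀ᶠ x in atTop,
      c x = Real.log x + 2 * Real.log (c x) + Real.log 2 + Real.log (1 + ε x) := by
    filter_upwards [heq, hpos, hεnn, eventually_gt_atTop (0:ℝ)] with x he h0 hε hx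
    have hprod : Real.exp (c x) = 2 * (c x) ^ 2 * x * (1 + ε x) := by
      simp only [hεdef]
      rw [he]
      field_simp
      ring
    have h1e : (0:ℝ) < 1 + ε x := by linarith
    have hlog : c x = Real.log (2 * (c x) ^ 2 * x * (1 + ε x)) := by
      rw [← hprod, Real.log_exp]
    conv_lhs => rw [hlog]
    rw [Real.log_mul (by positivity) (by positivity),
      Real.log_mul (by positivity) (by positivity),
      Real.log_mul (by norm_num) (by positivity), Real.log_pow]
    push_cast
    ring
  have hεlt : ∀ᶠ x in atTop, ε x ≤ 1 :=
    (heps.eventually_lt_const (by norm_num : (0:ℝ) < 1)).mono fun x h => h.le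
  have hl2 : Real.log 2 ≤ 1 := by
    have := Real.log_le_sub_one_of_pos (by norm_num : (0:ℝ) < 2)
    linarith
  -- upper bound c ≤ 3 log x
  have hlog4 : ∀ᶠ t : ℝ in atTop, Real.log t ≤ t / 4 := by
    filter_upwards [hlogid.eventually_lt_const (show (0:ℝ) < 1/4 by norm_num),
      eventually_gt_atTop (0:ℝ)] with t h1 h2
    rw [div_lt_iff₀ h2] at h1
    linarith
  have hcub : ∀ᶠ x in atTop, c x ≤ 3 * Real.log x := by
    filter_upwards [hC, hca.eventually hlog4, hεlt, hεnn,
      eventually_ge_atTop (Real.exp 4), hpos] with x hCx hl4 hε1 hε0 hx4 h0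
    have hlx : 4 ≤ Real.log x := by
      rw [← Real.log_exp 4]
      exact Real.log_le_log (Real.exp_pos 4) hx4
    have hl1e : Real.log (1 + ε x) ≤ 1 := by
      have := Real.log_le_sub_one_of_pos (show (0:ℝ) < 1 + ε x by linarith)
      linarith
    linarith
  have hclb : ∀ᶠ x in atTop, Real.log x ≤ c x := by
    filter_upwards [hC, hεnn, hca.eventually (eventually_ge_atTop (1:ℝ))] with x hCx hε0 hc1
    have h1 : 0 ≤ Real.log (c x) := Real.log_nonneg hc1
    have h2 : 0 ≤ Real.log (1 + ε x) := Real.log_nonneg (by linarith)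
    have h3 : 0 ≤ Real.log 2 := Real.log_nonneg (by norm_num)
    linarith
  -- c / log x → 1
  have hmid : Tendsto (fun x => (c x - Real.log x) / Real.log x) atTop (nhds 0) := by
    have hupper : Tendsto
        (fun x : ℝ => (2 * (Real.log 3 + Real.log (Real.log x)) + 2) / Real.log x)
        atTop (nhds 0) := by
      have h1 : Tendsto (fun u : ℝ => (2 * (Real.log 3 + Real.log u) + 2) / u)
          atTop (nhds 0) := by
        have ha : Tendsto (fun u : ℝ => (2 * Real.log 3 + 2) / u) atTop (nhds 0) :=
          tendsto_const_nhds.div_atTop tendsto_id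
        have hb := hlogid.const_mul (2:ℝ)
        rw [mul_zero] at hb
        have hab := ha.add hb
        rw [add_zero] at hab
        apply hab.congr'
        filter_upwards [eventually_gt_atTop (0:ℝ)] with u hu
        field_simp
        ring
      exact h1.comp Real.tendsto_log_atTop
    apply tendsto_of_tendsto_of_tendsto_of_le_of_le' tendsto_const_nhds hupper
    · filter_upwards [hclb, (Real.tendsto_log_atTop.comp tendsto_id).eventually
        (eventually_gt_atTop (0:ℝ))] with x h1 h2
      exact div_nonneg (by linarith) h2.le
    · filter_upwards [hC, hcub, hεlt, hεnn, hpos,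
        Real.tendsto_log_atTop.eventually (eventually_gt_atTop (0:ℝ))] with
        x hCx hub hε1 hε0 h0 hlx
      have hl1e : Real.log (1 + ε x) ≤ 1 := by
        have := Real.log_le_sub_one_of_pos (show (0:ℝ) < 1 + ε x by linarith)
        linarith
      have hlogc : Real.log (c x) ≤ Real.log 3 + Real.log (Real.log x) := by
        rw [← Real.log_mul (by norm_num) (by linarith)]
        exact Real.log_le_log h0 (by linarith)
      apply div_le_div_of_nonneg_right _ hlx.le
      linarith
  have hratio : Tendsto (fun x => c x / Real.log x) atTop (nhds 1) := by
    have h1 := hmid.const_add (1:ℝ)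
    rw [add_zero] at h1
    apply h1.congr'
    filter_upwards [Real.tendsto_log_atTop.eventually (eventually_gt_atTop (0:ℝ))] with x hlx
    field_simp
    ring
  have hlogc : Tendsto (fun x => Real.log (c x) - Real.log (Real.log x)) atTop (nhds 0) := by
    have h1 := (Real.continuousAt_log one_ne_zero).tendsto.comp hratio
    rw [Real.log_one] at h1
    apply h1.congr'
    filter_upwards [hpos, Real.tendsto_log_atTop.eventually (eventually_gt_atTop (0:ℝ))]
      with x h0 hlx
    simp only [Function.comp_apply]
    rw [Real.log_div (ne_of_gt h0) (ne_of_gt hlx)]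
  have hl1ε : Tendsto (fun x => Real.log (1 + ε x)) atTop (nhds 0) := by
    have h0 : Tendsto (fun x => 1 + ε x) atTop (nhds 1) := by
      simpa using tendsto_const_nhds.add heps
    have h1 := (Real.continuousAt_log one_ne_zero).tendsto.comp h0
    rw [Real.log_one] at h1
    exact h1
  have hA : Tendsto (fun x => c x - Real.log x - 2 * Real.log (Real.log x) - Real.log 2)
      atTop (nhds 0) := by
    have h1 := (hlogc.const_mul (2:ℝ)).add hl1ε
    rw [mul_zero, add_zero] at h1
    apply h1.congr'
    filter_upwards [hC] with x hCx
    linarith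
  have hKx : Tendsto (fun x => (K (c x) - x) / x) atTop (nhds 0) := by
    have h1 := K_asymp.comp hca
    have h1ε : Tendsto (fun x => 1 + ε x) atTop (nhds 1) := by
      simpa using tendsto_const_nhds.add heps
    have h2 := h1.mul h1ε
    rw [zero_mul] at h2
    have h3 := h2.add heps
    rw [add_zero] at h3
    apply h3.congr'
    filter_upwards [heq, hpos, hεnn, eventually_gt_atTop (0:ℝ)] with x he h0 hε hx
    have hF : Real.exp (c x) / (2 * (c x) ^ 2) = x * (1 + ε x) := by
      simp only [hεdef]
      rw [he]
      field_simp
      ring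
    simp only [Function.comp_apply]
    rw [hF]
    have h1e : (0:ℝ) < 1 + ε x := by linarith
    field_simp
    ring
  have hlogcx : Tendsto (fun x => Real.log (c x) / x) atTop (nhds 0) := by
    have hub2 : Tendsto (fun x : ℝ => 3 * (Real.log x / x)) atTop (nhds 0) := by
      simpa using hlogid.const_mul (3:ℝ)
    apply tendsto_of_tendsto_of_tendsto_of_le_of_le' tendsto_const_nhds hub2
    · filter_upwards [hca.eventually (eventually_ge_atTop (1:ℝ)),
        eventually_gt_atTop (0:ℝ)] with x h1 h2
      exact div_nonneg (Real.log_nonneg h1) h2.le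
    · filter_upwards [hcub, hpos, eventually_gt_atTop (0:ℝ)] with x hub h0 hx
      have h1 : Real.log (c x) ≤ 3 * Real.log x := by
        have := Real.log_le_sub_one_of_pos h0
        linarith
      calc Real.log (c x) / x ≤ 3 * Real.log x / x :=
            div_le_div_of_nonneg_right h1 hx.le
        _ = 3 * (Real.log x / x) := by ring
  -- final assembly
  rw [isLittleO_iff_tendsto']
  · have h1 := (hA.neg.add hKx).sub hlogcx
    rw [neg_zero, add_zero, sub_zero] at h1
    apply h1.congr'
    filter_upwards [eventually_gt_atTop (0:ℝ)] with x hx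
    simp only [ξ]
    field_simp
    ring
  · filter_upwards [eventually_gt_atTop (0:ℝ)] with x hx h
    exact absurd h (ne_of_gt hx)
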